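/- Let f: M → ℝ∪{±∞}, let x ∈ M, y ∈ I⁺(x), t > 0, and suppose f(y) and T̂_t f(x) := sup_z {f(z) - c_t(x,z)} are finite, with the sup attained at z = y: T̂_t f(x) = f(y) - c_t(x,y). If γ:[0,t]→M is a maximizing geodesic from x to y, then ∂L/∂v(y, γ'(t)) ∈ ∂⁺f(y), i.e. the Legendre transform of the final velocity is a super-differential of f at y. -/
import Mathlib


/- STATEMENT 10: Let f : M → ℝ∪{±∞}, y ∈ I⁺(x), t > 0, and suppose f(y) and
T̂_t f(x) = sup_z {f(z) - c_t(x,z)} are finite, with the sup attained at z = y.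
If γ:[0,t]→M is a maximizing geodesic from x to y then the Legendre transform
∂L/∂v(y,γ'(t)) of its final velocity lies in the super-differential ∂⁺f(y).
We work in a chart (M identified with ℝⁿ); the cost c, the chronology relation,
the maximizing-geodesic predicate and the Legendre covector `Lv γ t` (represented by
its dual vector) are data, and the fact that Lv γ t super-differentiates c_t(x,·)
at y (Lemma on the super-differential of the cost) is a recorded hypothesis. -/

open RealInnerProductSpace Topology

/-- Super-differential of a real-valued function. -/
def superDiffR {n : ℕ} (g : EuclideanSpace ℝ (Fin n) → ℝ) (y : EuclideanSpace ℝ (Fin n)) :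
    Set (EuclideanSpace ℝ (Fin n)) :=
  {p | ∀ ε : ℝ, 0 < ε → ∀ᶠ z in 𝓝 y, g z ≤ g y + ⟪p, z - y⟫ + ε * ‖z - y‖}

/-- Super-differential of an extended-real-valued function. -/
def superDiffE {n : ℕ} (f : EuclideanSpace ℝ (Fin n) → EReal) (y : EuclideanSpace ℝ (Fin n)) :
    Set (EuclideanSpace ℝ (Fin n)) :=
  {p | ∀ ε : ℝ, 0 < ε → ∀ᶠ z in 𝓝 y,
    f z ≤ f y + ((⟪p, z - y⟫ + ε * ‖z - y‖ : ℝ) : EReal)}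

theorem stmt_10 {n : ℕ}
    (c : ℝ → EuclideanSpace ℝ (Fin n) → EuclideanSpace ℝ (Fin n) → ℝ)
    (IFuture : EuclideanSpace ℝ (Fin n) → EuclideanSpace ℝ (Fin n) → Prop)
    (IsMaxGeodesic : ℝ → EuclideanSpace ℝ (Fin n) → EuclideanSpace ℝ (Fin n) →
      (ℝ → EuclideanSpace ℝ (Fin n)) → Prop)
    (Lv : (ℝ → EuclideanSpace ℝ (Fin n)) → ℝ → EuclideanSpace ℝ (Fin n))
    (f : EuclideanSpace ℝ (Fin n) → EReal)
    (t : ℝ) (x y : EuclideanSpace ℝ (Fin n)) (ht : 0 < t) (hI : IFuture x y)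
    (hfy : f y ≠ ⊤ ∧ f y ≠ ⊥)
    (hfin : (⨆ z, f z - ((c t x z : ℝ) : EReal)) ≠ ⊤ ∧
            (⨆ z, f z - ((c t x z : ℝ) : EReal)) ≠ ⊥)
    (hatt : (⨆ z, f z - ((c t x z : ℝ) : EReal)) = f y - ((c t x y : ℝ) : EReal))
    -- super-differentiability of c_t(x,·) at y by the Legendre transform of the
    -- final velocity of any maximizing geodesic (property of the cost):
    (hLv : ∀ γ, IsMaxGeodesic t x y γ → Lv γ t ∈ superDiffR (fun z => c t x z) y) :
    ∀ γ, IsMaxGeodesic t x y γ → Lv γ t ∈ superDiffE f y := by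
  intro γ hγ ε hε
  obtain ⟨a, ha⟩ : ∃ a : ℝ, f y = (a : EReal) := ⟨(f y).toReal, (EReal.coe_toReal hfy.1 hfy.2).symm⟩
  filter_upwards [hLv γ hγ ε hε] with z hz
  have hsup : f z - ((c t x z : ℝ) : EReal) ≤ f y - ((c t x y : ℝ) : EReal) := by
    rw [← hatt]; exact le_iSup (fun z => f z - ((c t x z : ℝ) : EReal)) z
  rw [ha] at hsup ⊢
  rcases eq_top_or_lt_top (f z) with hfz | hfz
  · exfalso
    rw [hfz] at hsup
    rw [EReal.top_sub_coe, ← EReal.coe_sub] at hsup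
    exact (EReal.coe_lt_top _).not_ge hsup
  · rcases eq_bot_or_bot_lt (f z) with hb | hb
    · simp [hb]
    · obtain ⟨b, hbz⟩ : ∃ b : ℝ, f z = (b : EReal) :=
        ⟨(f z).toReal, (EReal.coe_toReal hfz.ne hb.ne').symm⟩
      rw [hbz] at hsup ⊢
      rw [← EReal.coe_sub, ← EReal.coe_sub, EReal.coe_le_coe_iff] at hsup
      rw [← EReal.coe_add, EReal.coe_le_coe_iff]
      linarith
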